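/- Let Ψ be a Duplicator strategy for the existential k-pebble game on structures A, B, given as a function from pairs (s, p) of a k-history over A and a pebble index p ∈ [k] to functions A → B. If Ψ is n-consistent — meaning α_n(s,p) = α_n(s',p') implies Ψ(s,p) = Ψ(s',p') — then the function Ψ' on n,k-histories defined by Ψ'(t) = Ψ(F(t), p), where p is the last pebble index in t, is well-defined on structured n,k-histories; i.e., for a structured n,k-history t ending in a pair with index p, α_n(F(t), p) = t, so Ψ'(t) depends only on t. -/

import Mathlib

/-- A list over `A × Fin k` is *basic* (for parameter `n`) if it has length at most `n`
and all its pebble indices (second components) are distinct. -/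
def basic {A : Type} {k : ℕ} (n : ℕ) (l : List (A × Fin k)) : Prop :=
  l.length ≤ n ∧ (l.map Prod.snd).Nodup

instance {A : Type} {k : ℕ} (n : ℕ) (l : List (A × Fin k)) : Decidable (basic n l) := by
  unfold basic; infer_instance

/-- The length of the largest basic prefix of `s`. -/
def lbp {A : Type} {k : ℕ} (n : ℕ) (s : List (A × Fin k)) : ℕ :=
  ((List.range (s.length + 1)).filter (fun m => decide (basic n (s.take m)))).foldr max 0

/-- The `n`-structure function `S_n`: decompose a `k`-history into its largest basic
prefix followed by the structuring of the rest. -/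
def Sn {A : Type} {k : ℕ} (n : ℕ) (s : List (A × Fin k)) : List (List (A × Fin k)) :=
  if h : s.length = 0 then []
  else if basic n s then [s]
  else s.take (max 1 (lbp n s)) :: Sn n (s.drop (max 1 (lbp n s)))
termination_by s.length
decreasing_by
  have h1 : 0 < s.length := Nat.pos_of_ne_zero h
  have h2 : 0 < max 1 (lbp n s) := lt_of_lt_of_le one_pos (le_max_left _ _)
  simp only [List.length_drop]
  omega

/-- An `n,k`-history (a list of blocks) is *structured* if for each pair of successive
blocks `s, s'`, either `s` has length exactly `n` or `s'` begins with a pair whose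
pebble index occurs in `s`. -/
def structured {A : Type} {k : ℕ} (n : ℕ) (t : List (List (A × Fin k))) : Prop :=
  t.Chain' (fun s s' => s.length = n ∨ ∃ a p, s'.head? = some (a, p) ∧ p ∈ s.map Prod.snd)

/-- `α_n (s, p)`: if the last basic block `s'` of `S_n s` has length `n` or already
contains the pebble index `p`, return `S_n s`; otherwise drop the last block. -/
def alphaN {A : Type} {k : ℕ} (n : ℕ) (s : List (A × Fin k)) (p : Fin k) :
    List (List (A × Fin k)) :=
  match (Sn n s).getLast? with
  | none => []
  | some s' =>
      if s'.length = n ∨ p ∈ s'.map Prod.snd then Sn n s else (Sn n s).dropLast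

lemma basic_take {A : Type} {k n : ℕ} {l : List (A × Fin k)} (h : basic n l) (m : ℕ) :
    basic n (l.take m) := by
  obtain ⟨h1, h2⟩ := h
  constructor
  · rw [List.length_take]; exact le_trans (min_le_right _ _) h1
  · exact h2.sublist ((List.take_sublist m l).map Prod.snd)

lemma le_foldr_max {l : List ℕ} {m : ℕ} (hm : m ∈ l) : m ≤ l.foldr max 0 := by
  induction l with
  | nil => simp at hm
  | cons a l ih =>
    rcases List.mem_cons.mp hm with rfl | hm'
    · exact le_max_left _ _
    · exact le_trans (ih hm') (le_max_right _ _)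

lemma foldr_max_le {l : List ℕ} {m : ℕ} (hall : ∀ x ∈ l, x ≤ m) : l.foldr max 0 ≤ m := by
  induction l with
  | nil => simp
  | cons a l ih =>
    exact max_le (hall a (List.mem_cons_self))
      (ih fun x hx => hall x (List.mem_cons_of_mem _ hx))

lemma lbp_eq {A : Type} {k : ℕ} (n : ℕ) (s : List (A × Fin k)) (m : ℕ)
    (hm : m ≤ s.length) (hb : basic n (s.take m))
    (hmax : ∀ j, j ≤ s.length → basic n (s.take j) → j ≤ m) :
    lbp n s = m := by
  unfold lbp
  apply le_antisymm
  · apply foldr_max_le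
    intro x hx
    rw [List.mem_filter, List.mem_range] at hx
    exact hmax x (by omega) (of_decide_eq_true hx.2)
  · apply le_foldr_max
    rw [List.mem_filter, List.mem_range]
    exact ⟨by omega, decide_eq_true hb⟩

lemma Sn_flatten {A : Type} {k : ℕ} {n : ℕ} :
    ∀ (t : List (List (A × Fin k))), (∀ l ∈ t, l ≠ []) → (∀ l ∈ t, basic n l) →
    structured n t → Sn n t.flatten = t := by
  intro t
  induction t with
  | nil => intro _ _ _; rw [List.flatten_nil, Sn]; rfl
  | cons s rest ih =>
    intro hne hbasic hstr
    have hs : s ≠ [] := hne s (List.mem_cons_self)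
    have hslen : 0 < s.length := List.length_pos_iff.mpr hs
    cases rest with
    | nil =>
      simp only [List.flatten, List.append_eq, List.append_nil]
      rw [Sn]
      rw [dif_neg (by omega), if_pos (hbasic s (List.mem_cons_self))]
    | cons s' rest' =>
      set f := (s' :: rest').flatten with hf
      have hs' : s' ≠ [] := hne s' (by simp)
      have hfne : f ≠ [] := by
        rw [hf, List.flatten_cons]
        intro h
        exact hs' (List.append_eq_nil_iff.mp h).1
      have hflat : (s :: s' :: rest').flatten = s ++ f := by
        simp [hf]
      -- the chain relation between s and s'
      have hrel : s.length = n ∨ ∃ a p, s'.head? = some (a, p) ∧ p ∈ s.map Prod.snd := by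
        have := hstr
        unfold structured at this
        simp only [List.Chain', List.isChain_cons_cons] at this
        exact this.1
      -- take (s.length + 1) of s ++ f is not basic
      have htake1 : (s ++ f).take (s.length + 1) = s ++ f.take 1 := by
        rw [List.take_append]
        simp
      have hnb1 : ¬ basic n ((s ++ f).take (s.length + 1)) := by
        rw [htake1]
        obtain ⟨c, f', hcf⟩ := List.exists_cons_of_ne_nil hfne
        rw [hcf]
        have htk : List.take 1 (c :: f') = [c] := rfl
        rw [htk]
        rcases hrel with hlen | ⟨a, p, hhead, hmem⟩
        · intro ⟨h1, _⟩
          simp [hlen] at h1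
        · have hc : c = (a, p) := by
            have hfh : f.head? = s'.head? := by
              rw [hf, List.flatten_cons, List.head?_append]
              cases s' with
              | nil => exact absurd rfl hs'
              | cons x l => simp
            rw [hcf, hhead] at hfh
            simpa using hfh
          rw [hc]
          intro ⟨_, h2⟩
          rw [List.map_append] at h2
          have := (List.nodup_append'.mp h2).2.2
          exact this hmem (by simp)
      have hnbasic : ¬ basic n (s ++ f) := by
        intro h
        exact hnb1 (basic_take h _)
      have hlbp : lbp n (s ++ f) = s.length := by
        apply lbp_eq
        · simp
        · rw [List.take_left]
          exact hbasic s (List.mem_cons_self)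
        · intro j hj hbj
          by_contra hjs
          push_neg at hjs
          apply hnb1
          have : (s ++ f).take (s.length + 1) = ((s ++ f).take j).take (s.length + 1) := by
            rw [List.take_take, min_eq_left (by omega)]
          rw [this]
          exact basic_take hbj _
      have hlen0 : (s ++ f).length ≠ 0 := by
        simp only [List.length_append]
        omega
      rw [hflat, Sn]
      rw [dif_neg hlen0, if_neg hnbasic, hlbp, max_eq_right hslen, List.take_left,
        List.drop_left]
      congr 1
      exact ih (fun l hl => hne l (List.mem_cons_of_mem _ hl))
        (fun l hl => hbasic l (List.mem_cons_of_mem _ hl))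
        (List.IsChain.tail hstr)

lemma getLast?_flatten {A : Type} {k : ℕ} :
    ∀ (t : List (List (A × Fin k))) (ht : t ≠ []), (∀ l ∈ t, l ≠ []) →
      t.flatten.getLast? = (t.getLast ht).getLast? := by
  intro t
  induction t with
  | nil => intro h; exact absurd rfl h
  | cons s rest ih =>
    intro _ hne
    cases rest with
    | nil => simp
    | cons s' rest' =>
      have hrne : (s' :: rest') ≠ [] := by simp
      have hfne : (s' :: rest').flatten ≠ [] := by
        simp only [List.flatten_cons]
        intro h
        exact hne s' (by simp) (List.append_eq_nil_iff.mp h).1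
      rw [List.flatten_cons, List.getLast?_append_of_ne_nil _ hfne,
        List.getLast_cons hrne]
      exact ih hrne (fun l hl => hne l (List.mem_cons_of_mem _ hl))

/-- if `Ψ` is an `n`-consistent Duplicator strategy for the existential
`k`-pebble game, then for every nonempty structured `n,k`-history `t` ending in a pair
with pebble index `p` we have `α_n (F t, p) = t`; consequently
`Ψ' t := Ψ (F t) p` depends only on `t` (any position `(s, q)` with `α_n (s, q) = t`
gets the same response). -/
theorem stmt_17 {A B : Type} {n k : ℕ} (hn : 1 ≤ n) (hnk : n ≤ k)
    (Ψ : List (A × Fin k) → Fin k → (A → B))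
    (hcons : ∀ s s' p p', alphaN n s p = alphaN n s' p' → Ψ s p = Ψ s' p')
    (t : List (List (A × Fin k)))
    (hne : ∀ l ∈ t, l ≠ []) (hbasic : ∀ l ∈ t, basic n l)
    (hstr : structured n t) (htne : t ≠ [])
    (p : Fin k) (hp : ∃ a : A, t.flatten.getLast? = some (a, p)) :
    alphaN n t.flatten p = t ∧
      ∀ (s : List (A × Fin k)) (q : Fin k), alphaN n s q = t → Ψ s q = Ψ t.flatten p := by
  have hSn : Sn n t.flatten = t := Sn_flatten t hne hbasic hstr
  obtain ⟨a, ha⟩ := hp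
  have hlastb : t.getLast htne ≠ [] := hne _ (List.getLast_mem htne)
  have hlast : t.flatten.getLast? = (t.getLast htne).getLast? := getLast?_flatten t htne hne
  have hpmem : p ∈ (t.getLast htne).map Prod.snd := by
    rw [hlast] at ha
    have : (a, p) ∈ t.getLast htne := by
      obtain ⟨h', heq⟩ := List.mem_getLast?_eq_getLast ha
      exact heq ▸ List.getLast_mem h'
    exact List.mem_map.mpr ⟨(a, p), this, rfl⟩
  have halpha : alphaN n t.flatten p = t := by
    unfold alphaN
    rw [hSn, List.getLast?_eq_getLast htne]
    simp only
    rw [if_pos (Or.inr hpmem)]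
  refine ⟨halpha, fun s q hsq => ?_⟩
  exact hcons s t.flatten q p (by rw [hsq, halpha])
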